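/- arXiv:2510.24420 — 4 statements merged into one kernel-verified Lean document; each statement's English description precedes it below -/
import Mathlib

section
/- The identity 2t·(1 + B)·A = B − t·(1 + B)·(1 + B²) holds in ℚ⟦t⟧; that is, A admits a rational expression in terms of B and t. -/
open PowerSeries

/-- The identity 2t·(1 + B)·A = B − t·(1 + B)·(1 + B²) holds in ℚ⟦t⟧. -/
theorem stmt_2 (A B : PowerSeries ℚ)
    (hA0 : constantCoeff A = 0) (hB0 : constantCoeff B = 0)
    (hA : A = X * (A + A ^ 2 + 2 * A * B + 3 * A * B ^ 2 + B ^ 4))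
    (hB : B = X * (1 + 2 * A + B + 2 * A * B + B ^ 2 + B ^ 3)) :
    2 * X * (1 + B) * A = B - X * (1 + B) * (1 + B ^ 2) := by
  nth_rewrite 2 [hB]
  ring
end

section
/- The series B satisfies the degree-6 algebraic equation −(B + 1)⁶·t² + 2·(3B² + 1)·(B + 1)²·t − B² − 2B = 0 in ℚ⟦t⟧. -/
open PowerSeries

/-- The series B satisfies the degree-6 algebraic equation
−(B + 1)⁶·t² + 2·(3B² + 1)·(B + 1)²·t − B² − 2B = 0 in ℚ⟦t⟧. -/
theorem stmt_3 (A B : PowerSeries ℚ)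
    (hA0 : constantCoeff A = 0) (hB0 : constantCoeff B = 0)
    (hA : A = X * (A + A ^ 2 + 2 * A * B + 3 * A * B ^ 2 + B ^ 4))
    (hB : B = X * (1 + 2 * A + B + 2 * A * B + B ^ 2 + B ^ 3)) :
    -(B + 1) ^ 6 * X ^ 2 + 2 * (3 * B ^ 2 + 1) * (B + 1) ^ 2 * X - B ^ 2 - 2 * B = 0 := by
  linear_combination (-4 * X * (1 + B) ^ 2) * hA +
    (-(2 * (1 + B) - 2 * X * (1 + B) * (1 + 2 * B + 3 * B ^ 2)
      - 4 * X * A * (1 + B)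
      - (B - X * (1 + 2 * A + B + 2 * A * B + B ^ 2 + B ^ 3)))) * hB
end

section
/- Setting S := −B·(1 + B)⁻¹ (well defined since 1 + B is a unit of ℚ⟦t⟧, B having zero constant term), the series S satisfies the algebraic equation t² − 2·(4S² + 2S + 1)·(1 + S)²·t − S·(S + 2)·(1 + S)⁴ = 0 in ℚ⟦t⟧. -/
open PowerSeries

/-- Setting S := −B·(1 + B)⁻¹, the series S satisfies the algebraic equation
t² − 2·(4S² + 2S + 1)·(1 + S)²·t − S·(S + 2)·(1 + S)⁴ = 0 in ℚ⟦t⟧. -/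
theorem stmt_5 (A B : PowerSeries ℚ)
    (hA0 : constantCoeff A = 0) (hB0 : constantCoeff B = 0)
    (hA : A = X * (A + A ^ 2 + 2 * A * B + 3 * A * B ^ 2 + B ^ 4))
    (hB : B = X * (1 + 2 * A + B + 2 * A * B + B ^ 2 + B ^ 3)) :
    ∀ S : PowerSeries ℚ, S = -B * (1 + B)⁻¹ →
      X ^ 2 - 2 * (4 * S ^ 2 + 2 * S + 1) * (1 + S) ^ 2 * X
        - S * (S + 2) * (1 + S) ^ 4 = 0 := by
  intro S hS
  have h1 : constantCoeff (1 + B) ≠ 0 := by simp [hB0]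
  have hu : (1 + B) * (1 + B)⁻¹ = 1 := PowerSeries.mul_inv_cancel _ h1
  have hne : (64 * (1 + B) ^ 6 : PowerSeries ℚ) ≠ 0 := by
    intro h
    have := congrArg (constantCoeff (R := ℚ)) h
    simp [hB0, map_ofNat] at this
  subst hS
  have key : (64 * (1 + B) ^ 6 : PowerSeries ℚ) *
      (X ^ 2 - 2 * (4 * (-B * (1 + B)⁻¹) ^ 2 + 2 * (-B * (1 + B)⁻¹) + 1) * (1 + -B * (1 + B)⁻¹) ^ 2 * X
        - (-B * (1 + B)⁻¹) * ((-B * (1 + B)⁻¹) + 2) * (1 + -B * (1 + B)⁻¹) ^ 4) = 0 := by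
    linear_combination (196 * X + 60 * B + 552 * B * X + (-100) * B ^ 2 + 276 * B ^ 2 * X + 20 * B ^ 3 + 20 * B ^ 4 + 60 * B ^ 4 * X + (-40) * B ^ 5 * X + (-20) * B ^ 6 * X + (-125) * A * X + 5 * A * B + 205 * A * B * X + (-130) * A * B ^ 2 + 260 * A * B ^ 2 * X + 25 * A * B ^ 3 + 20 * A * B ^ 4 + 45 * A * B ^ 4 * X + (-45) * A * B ^ 5 * X + (-20) * A * B ^ 6 * X + 95 * A ^ 2 * X + (-105) * A ^ 2 * B + 435 * A ^ 2 * B * X + (-80) * A ^ 2 * B ^ 2 + 365 * A ^ 2 * B ^ 2 * X + 30 * A ^ 2 * B ^ 3 + 65 * A ^ 2 * B ^ 3 * X + 15 * A ^ 2 * B ^ 4 * X + (-5) * A ^ 2 * B ^ 5 + (-25) * A ^ 2 * B ^ 5 * X + 5 * A ^ 2 * B ^ 6 * X + 5 * A ^ 2 * B ^ 7 * X + 285 * A ^ 3 * X + (-75) * A ^ 3 * B + 455 * A ^ 3 * B * X + (-10) * A ^ 3 * B ^ 2 + 180 * A ^ 3 * B ^ 2 * X + 5 * A ^ 3 * B ^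 3 + 20 * A ^ 3 * B ^ 3 * X + 15 * A ^ 3 * B ^ 4 * X + 5 * A ^ 3 * B ^ 5 * X + 150 * A ^ 4 * X + 170 * A ^ 4 * B * X + 10 * A ^ 4 * B ^ 2 * X + (-10) * A ^ 4 * B ^ 3 * X) * hA + (128 + (-64) * X + 64 * B + (-320) * B * X + (-576) * B ^ 2 * X + (-320) * B ^ 3 * X + 60 * B ^ 4 * X + (-100) * B ^ 5 * X + 20 * B ^ 6 * X + 20 * B ^ 7 * X + (-60) * A + (-68) * A * X + 100 * A * B + (-108) * A * B * X + (-20) * A * B ^ 2 + (-20) * A * B ^ 3 + (-240) * A * B ^ 3 * X + 105 * A * B ^ 4 * X + (-70) * A * B ^ 5 * X + 25 * A * B ^ 6 * X + 20 * A * B ^ 7 * X + (-5) * A ^ 2 + 65 * A ^ 2 * X + 130 * A ^ 2 * B + (-220) * A ^ 2 * B * X + (-25) * A ^ 2 * B ^ 2 + (-200) * A ^ 2 * B ^ 2 * X + (-20) * A ^ 2 * B ^ 3 + (-300) * A ^ 2 * B ^ 3 * X + 10 * A ^ 2 * B ^ 4 * X + (-20) * A ^ 2 * B ^ 5 * X +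 30 * A ^ 2 * B ^ 6 * X + (-5) * A ^ 2 * B ^ 8 * X + 105 * A ^ 3 + (-100) * A ^ 3 * X + 80 * A ^ 3 * B + (-420) * A ^ 3 * B * X + (-30) * A ^ 3 * B ^ 2 + (-420) * A ^ 3 * B ^ 2 * X + (-160) * A ^ 3 * B ^ 3 * X + 5 * A ^ 3 * B ^ 4 + 10 * A ^ 3 * B ^ 4 * X + (-20) * A ^ 3 * B ^ 5 * X + (-10) * A ^ 3 * B ^ 6 * X + 75 * A ^ 4 + (-180) * A ^ 4 * X + 10 * A ^ 4 * B + (-240) * A ^ 4 * B * X + (-5) * A ^ 4 * B ^ 2 + (-210) * A ^ 4 * B ^ 2 * X + (-20) * A ^ 4 * B ^ 3 * X + 10 * A ^ 4 * B ^ 4 * X + (-75) * A ^ 5 * X + (-10) * A ^ 5 * B * X + 5 * A ^ 5 * B ^ 2 * X) * hB + (128 * B + 512 * B * X + 64 * B ^ 2 + 1408 * B ^ 2 * X + 1792 * B ^ 3 * X + 1536 * B ^ 4 * X + 768 * B ^ 5 * X + 128 * B ^ 6 * X + (-576) * (1 + B)⁻¹ * B ^ 2 + (-1152) * (1 + B)⁻¹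 * B ^ 2 * X + (-1856) * (1 + B)⁻¹ * B ^ 3 + (-4480) * (1 + B)⁻¹ * B ^ 3 * X + (-2560) * (1 + B)⁻¹ * B ^ 4 + (-6912) * (1 + B)⁻¹ * B ^ 4 * X + (-1920) * (1 + B)⁻¹ * B ^ 5 + (-5376) * (1 + B)⁻¹ * B ^ 5 * X + (-768) * (1 + B)⁻¹ * B ^ 6 + (-2176) * (1 + B)⁻¹ * B ^ 6 * X + (-128) * (1 + B)⁻¹ * B ^ 7 + (-384) * (1 + B)⁻¹ * B ^ 7 * X + 1024 * (1 + B)⁻¹ ^ 2 * B ^ 3 + 1280 * (1 + B)⁻¹ ^ 2 * B ^ 3 * X + 4224 * (1 + B)⁻¹ ^ 2 * B ^ 4 + 5888 * (1 + B)⁻¹ ^ 2 * B ^ 4 * X + 7040 * (1 + B)⁻¹ ^ 2 * B ^ 5 + 10752 * (1 + B)⁻¹ ^ 2 * B ^ 5 * X + 5952 * (1 + B)⁻¹ ^ 2 * B ^ 6 + 9728 * (1 + B)⁻¹ ^ 2 * B ^ 6 * X + 2560 * (1 + B)⁻¹ ^ 2 * B ^ 7 + 4352 * (1 + B)⁻¹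 ^ 2 * B ^ 7 * X + 448 * (1 + B)⁻¹ ^ 2 * B ^ 8 + 768 * (1 + B)⁻¹ ^ 2 * B ^ 8 * X + (-896) * (1 + B)⁻¹ ^ 3 * B ^ 4 + (-512) * (1 + B)⁻¹ ^ 3 * B ^ 4 * X + (-4096) * (1 + B)⁻¹ ^ 3 * B ^ 5 + (-2560) * (1 + B)⁻¹ ^ 3 * B ^ 5 * X + (-7488) * (1 + B)⁻¹ ^ 3 * B ^ 6 + (-5120) * (1 + B)⁻¹ ^ 3 * B ^ 6 * X + (-6848) * (1 + B)⁻¹ ^ 3 * B ^ 7 + (-5120) * (1 + B)⁻¹ ^ 3 * B ^ 7 * X + (-3136) * (1 + B)⁻¹ ^ 3 * B ^ 8 + (-2560) * (1 + B)⁻¹ ^ 3 * B ^ 8 * X + (-576) * (1 + B)⁻¹ ^ 3 * B ^ 9 + (-512) * (1 + B)⁻¹ ^ 3 * B ^ 9 * X + 384 * (1 + B)⁻¹ ^ 4 * B ^ 5 + 1856 * (1 + B)⁻¹ ^ 4 * B ^ 6 + 3584 * (1 + B)⁻¹ ^ 4 * B ^ 7 + 3456 * (1 + B)⁻¹ ^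 4 * B ^ 8 + 1664 * (1 + B)⁻¹ ^ 4 * B ^ 9 + 320 * (1 + B)⁻¹ ^ 4 * B ^ 10 + (-64) * (1 + B)⁻¹ ^ 5 * B ^ 6 + (-320) * (1 + B)⁻¹ ^ 5 * B ^ 7 + (-640) * (1 + B)⁻¹ ^ 5 * B ^ 8 + (-640) * (1 + B)⁻¹ ^ 5 * B ^ 9 + (-320) * (1 + B)⁻¹ ^ 5 * B ^ 10 + (-64) * (1 + B)⁻¹ ^ 5 * B ^ 11) * hu
  exact (mul_eq_zero.mp key).resolve_left hne
end

section
/- Define F := t·(1 + 3A + 2AB + A² + AB²) − 2AB in ℚ⟦t⟧. Then for every n ≥ 0, (n − 1)·[tⁿ]F = 5·[tⁿ](A·B), where [tⁿ] denotes the coefficient of tⁿ and n − 1 is taken in ℤ. -/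
open PowerSeries

/-- Define F := t·(1 + 3A + 2AB + A² + AB²) − 2AB. Then for every n ≥ 0,
(n − 1)·[tⁿ]F = 5·[tⁿ](A·B), where n − 1 is taken in ℤ. -/
theorem stmt_6 (A B : PowerSeries ℚ)
    (hA0 : constantCoeff A = 0) (hB0 : constantCoeff B = 0)
    (hA : A = X * (A + A ^ 2 + 2 * A * B + 3 * A * B ^ 2 + B ^ 4))
    (hB : B = X * (1 + 2 * A + B + 2 * A * B + B ^ 2 + B ^ 3)) :
    ∀ n : ℕ,
      (((n : ℤ) - 1 : ℤ) : ℚ) *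
        coeff n (X * (1 + 3 * A + 2 * A * B + A ^ 2 + A * B ^ 2) - 2 * A * B)
      = 5 * coeff n (A * B) := by
  set DA := d⁄dX ℚ A with hDA
  set DB := d⁄dX ℚ B with hDB
  have e1 : DA = (A + A ^ 2 + 2*A*B + 3*A*B^2 + B^4)
      + X * ((1 + 2*A + 2*B + 3*B^2) * DA + (2*A + 6*A*B + 4*B^3) * DB) := by
    rw [hDA]
    conv_lhs =>
      rw [hA, show (X * (A + A ^ 2 + 2 * A * B + 3 * A * B ^ 2 + B ^ 4) : ℚ⟦X⟧)
        = X * (A + A*A + (A*B + A*B) + (A*(B*B) + A*(B*B) + A*(B*B)) + B*(B*(B*B)))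
        from by ring]
    simp only [Derivation.leibniz, map_add, derivative_X, smul_eq_mul, mul_one, one_mul]
    ring
  have e2 : DB = (1 + 2*A + B + 2*A*B + B^2 + B^3)
      + X * ((2 + 2*B) * DA + (1 + 2*A + 2*B + 3*B^2) * DB) := by
    rw [hDB]
    conv_lhs =>
      rw [hB, show (X * (1 + 2 * A + B + 2 * A * B + B ^ 2 + B ^ 3) : ℚ⟦X⟧)
        = X * (1 + (A + A) + B + (A*B + A*B) + B*B + B*(B*B)) from by ring]
    simp only [Derivation.leibniz, map_add, Derivation.map_one_eq_zero, derivative_X,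
      smul_eq_mul, mul_one, one_mul, mul_zero, zero_add, add_zero, zero_mul]
    ring
  have eF : (d⁄dX ℚ) (X * (1 + 3 * A + 2 * A * B + A ^ 2 + A * B ^ 2) - 2 * A * B)
      = (1 + 3*A + 2*A*B + A^2 + A*B^2)
        + X * (3*DA + 2*(DA*B + A*DB) + 2*A*DA + DA*B^2 + 2*A*B*DB)
        - 2*(DA*B + A*DB) := by
    rw [show (X * (1 + 3 * A + 2 * A * B + A ^ 2 + A * B ^ 2) - 2 * A * B : ℚ⟦X⟧)
      = X * (1 + (A + A + A) + (A*B + A*B) + A*A + A*(B*B)) - (A*B + A*B) from by ring]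
    simp only [Derivation.leibniz, map_add, map_sub, Derivation.map_one_eq_zero, derivative_X,
      smul_eq_mul, mul_one, one_mul, mul_zero, zero_add, add_zero, zero_mul, hDA, hDB]
    ring
  have hD : (4*(X:ℚ⟦X⟧)^2*A^2 - 8*(X:ℚ⟦X⟧)^2*A*B + (X:ℚ⟦X⟧)^2*B^4 + 4*(X:ℚ⟦X⟧)^2*B^3
      + 10*(X:ℚ⟦X⟧)^2*B^2 + 4*(X:ℚ⟦X⟧)^2*B + (X:ℚ⟦X⟧)^2 - 4*(X:ℚ⟦X⟧)*A
      - 6*(X:ℚ⟦X⟧)*B^2 - 4*(X:ℚ⟦X⟧)*B - 2*(X:ℚ⟦X⟧) + 1) ≠ 0 := by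
    intro h
    have h1 := congrArg (constantCoeff) h
    simp [hA0, hB0] at h1
  have key : X * ((d⁄dX ℚ) (X * (1 + 3 * A + 2 * A * B + A ^ 2 + A * B ^ 2) - 2 * A * B))
      - (X * (1 + 3 * A + 2 * A * B + A ^ 2 + A * B ^ 2) - 2 * A * B) = 5 * (A * B) := by
    rw [eF]
    apply mul_left_cancel₀ hD
    linear_combination
      (-4*(X:ℚ⟦X⟧)^3*A^2 - 4*(X:ℚ⟦X⟧)^3*A*B^2 - 4*(X:ℚ⟦X⟧)^3*A - 3*(X:ℚ⟦X⟧)^3*B^4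
        - 8*(X:ℚ⟦X⟧)^3*B^3 - 14*(X:ℚ⟦X⟧)^3*B^2 - 8*(X:ℚ⟦X⟧)^3*B - 3*(X:ℚ⟦X⟧)^3
        - 2*(X:ℚ⟦X⟧)^2*A + 6*(X:ℚ⟦X⟧)^2*B^3 + 5*(X:ℚ⟦X⟧)^2*B^2 + 4*(X:ℚ⟦X⟧)^2*B
        + 3*(X:ℚ⟦X⟧)^2 - 2*(X:ℚ⟦X⟧)*B) * e1
      + (8*(X:ℚ⟦X⟧)^3*A^2*B + 8*(X:ℚ⟦X⟧)^3*A*B^3 + 4*(X:ℚ⟦X⟧)^3*A*B^2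
        + 16*(X:ℚ⟦X⟧)^3*A*B + 4*(X:ℚ⟦X⟧)^3*A + 4*(X:ℚ⟦X⟧)^3*B^5 + 8*(X:ℚ⟦X⟧)^3*B^4
        + 12*(X:ℚ⟦X⟧)^3*B^3 + 4*(X:ℚ⟦X⟧)^2*A^2 - 6*(X:ℚ⟦X⟧)^2*A*B^2
        + 2*(X:ℚ⟦X⟧)^2*A*B + 4*(X:ℚ⟦X⟧)^2*A - 8*(X:ℚ⟦X⟧)^2*B^4 - 2*(X:ℚ⟦X⟧)*A) * e2
      + (4*(X:ℚ⟦X⟧)^2*A^2 - 12*(X:ℚ⟦X⟧)^2*A*B^2 - 16*(X:ℚ⟦X⟧)^2*A*B + 4*(X:ℚ⟦X⟧)^2*A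
        - 5*(X:ℚ⟦X⟧)^2*B^4 + 6*(X:ℚ⟦X⟧)^2*B^2 + 3*(X:ℚ⟦X⟧)^2 + 4*(X:ℚ⟦X⟧)*A*B
        - 2*(X:ℚ⟦X⟧)*A + 8*(X:ℚ⟦X⟧)*B^3 + 13*(X:ℚ⟦X⟧)*B^2 + 2*(X:ℚ⟦X⟧)*B
        - (X:ℚ⟦X⟧) - 4*B) * hA
      + (16*(X:ℚ⟦X⟧)^2*A*B^3 + 12*(X:ℚ⟦X⟧)^2*A*B^2 - 8*(X:ℚ⟦X⟧)^2*A*B - 4*(X:ℚ⟦X⟧)^2*A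
        + 4*(X:ℚ⟦X⟧)^2*B^5 - 8*(X:ℚ⟦X⟧)^2*B^4 - 12*(X:ℚ⟦X⟧)^2*B^3 - 9*(X:ℚ⟦X⟧)*A*B^2
        - 14*(X:ℚ⟦X⟧)*A*B - 3*(X:ℚ⟦X⟧)*A - 6*(X:ℚ⟦X⟧)*B^4 + A) * hB
  intro n
  cases n with
  | zero =>
    simp [hA0, hB0]
  | succ m =>
    have hc := congrArg (⇑(coeff (m+1))) key
    rw [map_sub, coeff_succ_X_mul, coeff_derivative] at hc
    have h5 : coeff (m+1) (5 * (A * B)) = 5 * coeff (m+1) (A * B) := by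
      rw [show (5 : ℚ⟦X⟧) = C 5 from (map_ofNat (C) 5).symm, coeff_C_mul]
    rw [h5] at hc
    push_cast
    linear_combination hc
end
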